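/- Let d ≥ 1 and k ≥ 2d be integers. Let H_d be the subgroup of ℤ^{1+k} generated by the 2d vectors e_1 − e_2, e_2 − e_3, …, e_{2d−1} − e_{2d} and h − e_1 − e_2 − ⋯ − e_d, equipped with the restriction Q_d of the form Q. Then for every integer m ≥ 1 there is no injective ℤ-linear map j : H_d → ℤ^m satisfying B_m(j(x), j(y)) = Q_d(x, y) for all x, y ∈ H_d. -/

import Mathlib

/-- The standard negative definite symmetric bilinear form on `ℤ^m`. -/
def B (m : ℕ) (x y : Fin m → ℤ) : ℤ := -∑ i, x i * y i

/-- On `ℤ^{1+k}` with coordinates indexed by `Fin (k+1)`, coordinate `0` is `h` and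
coordinate `i` (for `1 ≤ i ≤ k`) is `e_i`.  `Q` is the symmetric bilinear form of
signature `(1,k)`: `Q(x,y) = x₀y₀ - ∑_{i=1}^k xᵢyᵢ`. -/
def Qform (k : ℕ) (x y : Fin (k+1) → ℤ) : ℤ :=
  2 * (x 0 * y 0) - ∑ i, x i * y i

/-- The basis vector of `ℤ^{1+k}` with a `1` in coordinate `i`; `basisVec k 0 = h`
and `basisVec k i = e_i` for `1 ≤ i ≤ k`. -/
def basisVec (k : ℕ) (i : ℕ) : Fin (k+1) → ℤ := fun j => if (j : ℕ) = i then 1 else 0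

/-- The `2d` generators of `H_d`: `e_1 - e_2, …, e_{2d-1} - e_{2d}` and
`h - e_1 - ⋯ - e_d`. -/
def gen (d k : ℕ) : Fin (2*d) → (Fin (k+1) → ℤ) := fun j =>
  if (j : ℕ) < 2*d - 1 then basisVec k ((j : ℕ) + 1) - basisVec k ((j : ℕ) + 2)
  else basisVec k 0 - ∑ i ∈ Finset.Icc 1 d, basisVec k i

namespace NoEmbAux



variable {m : ℕ}

def p (x y : Fin m → ℤ) : ℤ := ∑ i, x i * y i

lemma p_comm (x y : Fin m → ℤ) : p x y = p y x := by
  unfold p; exact Finset.sum_congr rfl fun i _ => mul_comm _ _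

lemma p_add_left (x y z : Fin m → ℤ) : p (x + y) z = p x z + p y z := by
  unfold p; rw [← Finset.sum_add_distrib]; exact Finset.sum_congr rfl fun i _ => by
    simp [add_mul]

lemma p_sub_left (x y z : Fin m → ℤ) : p (x - y) z = p x z - p y z := by
  unfold p; rw [← Finset.sum_sub_distrib]; exact Finset.sum_congr rfl fun i _ => by
    simp [sub_mul]

lemma p_smul_left (c : ℤ) (x z : Fin m → ℤ) : p (c • x) z = c * p x z := by
  unfold p; rw [Finset.mul_sum]; exact Finset.sum_congr rfl fun i _ => by
    simp [mul_assoc]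

lemma p_add_right (x y z : Fin m → ℤ) : p z (x + y) = p z x + p z y := by
  rw [p_comm, p_add_left, p_comm x z, p_comm y z]

lemma p_sub_right (x y z : Fin m → ℤ) : p z (x - y) = p z x - p z y := by
  rw [p_comm, p_sub_left, p_comm x z, p_comm y z]

lemma p_smul_right (c : ℤ) (x z : Fin m → ℤ) : p z (c • x) = c * p z x := by
  rw [p_comm, p_smul_left, p_comm x z]

lemma p_sum_left {ι : Type*} (s : Finset ι) (f : ι → (Fin m → ℤ)) (z : Fin m → ℤ) :
    p (∑ i ∈ s, f i) z = ∑ i ∈ s, p (f i) z := by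
  classical
  induction s using Finset.induction with
  | empty => simp [p]
  | insert _ _ h ih => rw [Finset.sum_insert h, p_add_left, ih, Finset.sum_insert h]

lemma p_sum_right {ι : Type*} (s : Finset ι) (f : ι → (Fin m → ℤ)) (z : Fin m → ℤ) :
    p z (∑ i ∈ s, f i) = ∑ i ∈ s, p z (f i) := by
  rw [p_comm, p_sum_left]; exact Finset.sum_congr rfl fun i _ => p_comm _ _

lemma p_self_nonneg (x : Fin m → ℤ) : 0 ≤ p x x :=
  Finset.sum_nonneg fun i _ => mul_self_nonneg _

lemma p_self_eq_zero {x : Fin m → ℤ} (h : p x x = 0) : x = 0 :=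
  dotProduct_self_eq_zero.mp h

/-- An "orthonormal" family in `ℤ^m`. -/
def Orthonormal {t : ℕ} (z : Fin t → (Fin m → ℤ)) : Prop :=
  (∀ i, p (z i) (z i) = 1) ∧ (∀ i j, i ≠ j → p (z i) (z j) = 0)

lemma proj_single {t : ℕ} {z : Fin t → (Fin m → ℤ)} (hz : Orthonormal z)
    (w : Fin m → ℤ) (i : Fin t) :
    p (∑ a, p w (z a) • z a) (z i) = p w (z i) := by
  rw [p_sum_left]
  have : ∀ a : Fin t, p (p w (z a) • z a) (z i)
      = if a = i then p w (z i) else 0 := by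
    intro a
    rw [p_smul_left]
    by_cases h : a = i
    · simp [h, hz.1 i]
    · simp [h, hz.2 a i h]
  rw [Finset.sum_congr rfl fun a _ => this a, Finset.sum_ite_eq' Finset.univ i]
  simp

lemma residual_orth {t : ℕ} {z : Fin t → (Fin m → ℤ)} (hz : Orthonormal z)
    (w : Fin m → ℤ) (i : Fin t) :
    p (w - ∑ a, p w (z a) • z a) (z i) = 0 := by
  rw [p_sub_left, proj_single hz, sub_self]

lemma proj_norm {t : ℕ} {z : Fin t → (Fin m → ℤ)} (hz : Orthonormal z)
    (w : Fin m → ℤ) :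
    p (∑ a, p w (z a) • z a) (∑ a, p w (z a) • z a) = ∑ a, (p w (z a))^2 := by
  rw [p_sum_right]
  refine Finset.sum_congr rfl fun a _ => ?_
  rw [p_smul_right, proj_single hz]
  ring

lemma proj_dot {t : ℕ} {z : Fin t → (Fin m → ℤ)} (hz : Orthonormal z)
    (w : Fin m → ℤ) :
    p w (∑ a, p w (z a) • z a) = ∑ a, (p w (z a))^2 := by
  rw [p_sum_right]
  refine Finset.sum_congr rfl fun a _ => ?_
  rw [p_smul_right]; ring

lemma residual_norm {t : ℕ} {z : Fin t → (Fin m → ℤ)} (hz : Orthonormal z)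
    (w : Fin m → ℤ) :
    p (w - ∑ a, p w (z a) • z a) (w - ∑ a, p w (z a) • z a)
      = p w w - ∑ a, (p w (z a))^2 := by
  rw [p_sub_left, p_sub_right, p_sub_right, proj_dot hz, proj_norm hz,
    p_comm (∑ a, p w (z a) • z a) w, proj_dot hz]
  ring

lemma bessel {t : ℕ} {z : Fin t → (Fin m → ℤ)} (hz : Orthonormal z)
    (w : Fin m → ℤ) :
    ∑ a, (p w (z a))^2 ≤ p w w := by
  have := p_self_nonneg (w - ∑ a, p w (z a) • z a)
  rw [residual_norm hz] at this
  omega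



def E (a : Fin m) : Fin m → ℤ := fun i => if i = a then 1 else 0

lemma p_E_right (x : Fin m → ℤ) (a : Fin m) : p x (E a) = x a := by
  unfold p E
  rw [Finset.sum_congr rfl (fun i _ => by rw [mul_ite, mul_one, mul_zero]),
    Finset.sum_ite_eq' Finset.univ a]
  simp

lemma E_self (a : Fin m) : p (E a) (E a) = 1 := by
  rw [p_E_right]; simp [E]

lemma E_orth {a b : Fin m} (h : a ≠ b) : p (E a) (E b) = (0:ℤ) := by
  rw [p_E_right]; simp [E, Ne.symm h]

lemma ortho_single (a : Fin m) : Orthonormal (fun _ : Fin 1 => E a) :=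
  ⟨fun _ => E_self a, fun i j hij => absurd (Subsingleton.elim i j) hij⟩

/-- Peeling off one coordinate. -/
lemma peel {u : Fin m → ℤ} (hu : p u u ≤ 2) {a : Fin m} (ha : u a ≠ 0) :
    (u a = 1 ∨ u a = -1) ∧ p (u - u a • E a) (u - u a • E a) = p u u - 1
      ∧ (u - u a • E a) a = 0 := by
  have hsum : ∑ i : Fin 1, p u ((fun _ : Fin 1 => E a) i) • (fun _ : Fin 1 => E a) i
      = u a • E a := by
    rw [Fin.sum_univ_one, p_E_right]
  have hb := bessel (ortho_single a) u
  rw [Fin.sum_univ_one, p_E_right] at hb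
  have hnn := p_self_nonneg u
  have hpm : u a = 1 ∨ u a = -1 := by
    have h1 : u a ≤ 1 := by nlinarith
    have h2 : -1 ≤ u a := by nlinarith
    omega
  have hrn := residual_norm (ortho_single a) u
  rw [hsum, Fin.sum_univ_one, p_E_right] at hrn
  have hro := residual_orth (ortho_single a) u (0 : Fin 1)
  rw [hsum] at hro
  refine ⟨hpm, ?_, ?_⟩
  · rw [hrn]; rcases hpm with h|h <;> rw [h] <;> ring
  · have := p_E_right (u - u a • E a) a
    rw [hro] at this; exact this.symm

lemma p_zero_zero : p (0 : Fin m → ℤ) 0 = 0 := by simp [p]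

lemma ne_zero_of_p {x : Fin m → ℤ} {c : ℤ} (h : p x x = c) (hc : c ≠ 0) : x ≠ 0 := by
  intro h0; rw [h0, p_zero_zero] at h; exact hc h.symm

lemma norm_two {u : Fin m → ℤ} (hu : p u u = 2) :
    ∃ z1 z2 : Fin m → ℤ, p z1 z1 = 1 ∧ p z2 z2 = 1 ∧ p z1 z2 = 0 ∧ u = z1 - z2 := by
  obtain ⟨a, ha⟩ := Function.ne_iff.mp (ne_zero_of_p hu (by norm_num))
  rw [show (0 : Fin m → ℤ) a = 0 from rfl] at ha
  obtain ⟨hpma, hra, hza⟩ := peel hu.le ha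
  set r := u - u a • E a with hrdef
  rw [hu] at hra
  have hr1 : p r r = 1 := by omega
  obtain ⟨b, hb⟩ := Function.ne_iff.mp (ne_zero_of_p hr1 (by norm_num))
  rw [show (0 : Fin m → ℤ) b = 0 from rfl] at hb
  have hba : b ≠ a := fun h => hb (h ▸ hza)
  obtain ⟨hpmb, hrb, _⟩ := peel (by omega : p r r ≤ 2) hb
  have hr0 : r - r b • E b = 0 := p_self_eq_zero (by omega)
  have hu_eq : u = u a • E a + r b • E b := by
    have h1 : r = r b • E b := by
      have := sub_eq_zero.mp hr0; exact this
    rw [hrdef] at h1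
    linear_combination (norm := module) h1
  refine ⟨u a • E a, (-(r b)) • E b, ?_, ?_, ?_, ?_⟩
  · rw [p_smul_left, p_smul_right, E_self]; rcases hpma with h|h <;> rw [h] <;> ring
  · rw [p_smul_left, p_smul_right, E_self]; rcases hpmb with h|h <;> rw [h] <;> ring
  · rw [p_smul_left, p_smul_right, E_orth (Ne.symm hba)]; ring
  · linear_combination (norm := module) hu_eq


lemma p_neg_left (x y : Fin m → ℤ) : p (-x) y = - p x y := by
  have h : -x = (0:Fin m → ℤ) - x := by abel
  have h0 : p (0 : Fin m → ℤ) y = 0 := by simp [p]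
  rw [h, p_sub_left, h0, zero_sub]

lemma p_neg_right (x y : Fin m → ℤ) : p y (-x) = - p y x := by
  rw [p_comm, p_neg_left, p_comm]

lemma p_neg_neg (x y : Fin m → ℤ) : p (-x) (-y) = p x y := by
  rw [p_neg_left, p_neg_right, neg_neg]

/-- Hypotheses on an A-chain of norm-2 vectors. -/
def ChainHyp (N : ℕ) (u : ℕ → (Fin m → ℤ)) : Prop :=
  (∀ i, i < N → p (u i) (u i) = 2) ∧
  (∀ i, i+1 < N → p (u i) (u (i+1)) = -1) ∧
  (∀ i j, i+2 ≤ j → j < N → p (u i) (u j) = 0)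

/-- `z 0, …, z t` is a standard orthonormal presentation of `u 0, …, u (t-1)`. -/
def Rep (u : ℕ → (Fin m → ℤ)) (t : ℕ) (z : ℕ → (Fin m → ℤ)) : Prop :=
  (∀ i, i ≤ t → p (z i) (z i) = 1) ∧
  (∀ i j, i < j → j ≤ t → p (z i) (z j) = 0) ∧
  (∀ i, i < t → u i = z i - z (i+1))

lemma rep_orth {u z : ℕ → (Fin m → ℤ)} {t : ℕ} (hz : Rep u t z) :
    Orthonormal (fun a : Fin (t+1) => z a) := by
  constructor
  · intro i; exact hz.1 i (by omega)
  · intro i j hij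
    have hv : (i : ℕ) ≠ (j : ℕ) := fun h => hij (Fin.ext h)
    rcases lt_or_gt_of_ne hv with h | h
    · exact hz.2.1 _ _ h (by omega)
    · rw [p_comm]; exact hz.2.1 _ _ h (by omega)

/-- Extend a standard representation by one step, given that the new vector pairs
`0,…,0,1` with `z 0, …, z t`. -/
lemma rep_extend {N : ℕ} {u : ℕ → (Fin m → ℤ)} (hc : ChainHyp N u)
    {t : ℕ} (htN : t < N) {z : ℕ → (Fin m → ℤ)} (hz : Rep u t z)
    (hc0 : ∀ i, i < t → p (u t) (z i) = 0) (hct : p (u t) (z t) = 1) :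
    Rep u (t+1) (fun n => if n ≤ t then z n else -(u t - z t)) := by
  have horth := rep_orth hz
  set zf : Fin (t+1) → (Fin m → ℤ) := fun a => z a with hzf
  have hcf : ∀ a : Fin (t+1), p (u t) (zf a) = if (a : ℕ) = t then 1 else 0 := by
    intro a
    by_cases h : (a : ℕ) = t
    · rw [if_pos h]; rw [hzf]; simp only []; rw [h]; exact hct
    · rw [if_neg h]; exact hc0 a (by omega)
  have hproj : (∑ a, p (u t) (zf a) • zf a) = z t := by
    rw [Fin.sum_univ_castSucc]
    have h1 : ∀ i : Fin t, p (u t) (zf i.castSucc) • zf i.castSucc = 0 := by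
      intro i
      rw [hcf]
      rw [if_neg (by simp [Fin.castSucc]; omega)]
      exact zero_smul _ _
    rw [Finset.sum_congr rfl fun i _ => h1 i, Finset.sum_const, smul_zero]
    rw [hcf, if_pos (by simp)]
    simp [hzf]
  have hsumsq : (∑ a, (p (u t) (zf a))^2) = 1 := by
    rw [Fin.sum_univ_castSucc]
    have h1 : ∀ i : Fin t, (p (u t) (zf i.castSucc))^2 = 0 := by
      intro i
      rw [hcf, if_neg (by simp [Fin.castSucc]; omega)]
      ring
    rw [Finset.sum_congr rfl fun i _ => h1 i, Finset.sum_const, smul_zero]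
    rw [hcf, if_pos (by simp)]
    ring
  have hrorth : ∀ a : Fin (t+1), p (u t - z t) (zf a) = 0 := by
    intro a
    have := residual_orth horth (u t) a
    rw [hproj] at this
    exact this
  have hrnorm : p (u t - z t) (u t - z t) = 1 := by
    have := residual_norm horth (u t)
    rw [hproj, hsumsq, hc.1 t htN] at this
    rw [this]; norm_num
  refine ⟨?_, ?_, ?_⟩
  · intro i hi
    by_cases h : i ≤ t
    · simp only [if_pos h]; exact hz.1 i h
    · simp only [if_neg h]; rw [p_neg_neg]; exact hrnorm
  · intro i j hij hj
    have hit : i ≤ t := by omega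
    by_cases h : j ≤ t
    · simp only [if_pos h, if_pos hit]; exact hz.2.1 i j hij h
    · simp only [if_neg h, if_pos hit]
      rw [p_neg_right, p_comm]
      have := hrorth ⟨i, by omega⟩
      rw [hzf] at this; simp only [] at this
      rw [this]; ring
  · intro i hi
    by_cases h : i < t
    · simp only [if_pos (by omega : i ≤ t), if_pos (by omega : i + 1 ≤ t)]
      exact hz.2.2 i h
    · have hieq : i = t := by omega
      subst hieq
      simp only []
      rw [if_pos (le_refl i), if_neg (by omega : ¬ i + 1 ≤ i)]
      abel

lemma const_chain (c : ℕ → ℤ) (t : ℕ) (hstep : ∀ i, i + 1 < t → c (i+1) = c i) :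
    ∀ i, i < t → c i = c 0 := by
  intro i
  induction i with
  | zero => intro _; rfl
  | succ n ih => intro h; rw [hstep n h, ih (by omega)]

lemma rep_step {N : ℕ} {u : ℕ → (Fin m → ℤ)} (hc : ChainHyp N u) (hN4 : 4 ≤ N)
    {t : ℕ} (ht1 : 1 ≤ t) (htN : t < N) {z : ℕ → (Fin m → ℤ)} (hz : Rep u t z) :
    ∃ z', Rep u (t+1) z' := by
  obtain ⟨hz1, hz0, hzu⟩ := hz
  have horth := rep_orth ⟨hz1, hz0, hzu⟩
  set c : ℕ → ℤ := fun i => p (u t) (z i) with hcdef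
  -- the pairing relations
  have hstep : ∀ i, i + 1 < t → c (i+1) = c i := by
    intro i hi
    have hfar : p (u i) (u t) = 0 := hc.2.2 i t (by omega) htN
    rw [hzu i (by omega), p_sub_left] at hfar
    have := p_comm (u t) (z i)
    have := p_comm (u t) (z (i+1))
    simp only [hcdef]
    rw [p_comm (u t) (z (i+1)), p_comm (u t) (z i)]
    omega
  have hconst := const_chain c t hstep
  have hct : c t = c 0 + 1 := by
    have hadj : p (u (t-1)) (u t) = -1 := by
      have := hc.2.1 (t-1) (by omega)
      rwa [show t - 1 + 1 = t by omega] at this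
    rw [hzu (t-1) (by omega), p_sub_left, show t - 1 + 1 = t by omega] at hadj
    have h1 : c (t-1) = c 0 := hconst (t-1) (by omega)
    rw [p_comm (z (t-1)) (u t), p_comm (z t) (u t)] at hadj
    simp only [hcdef] at h1 ⊢
    omega
  -- Bessel bound
  have hbess := bessel horth (u t)
  rw [hc.1 t htN] at hbess
  have hsum : (∑ a : Fin (t+1), (p (u t) ((fun a : Fin (t+1) => z a) a))^2)
      = t * (c 0)^2 + (c 0 + 1)^2 := by
    rw [Fin.sum_univ_castSucc]
    have h1 : ∀ i : Fin t, (p (u t) (z (i.castSucc : Fin (t+1))))^2 = (c 0)^2 := by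
      intro i
      have : ((i.castSucc : Fin (t+1)) : ℕ) = (i : ℕ) := rfl
      rw [this]
      have := hconst i (i.isLt)
      simp only [hcdef] at this
      rw [this]
    rw [Finset.sum_congr rfl fun i _ => h1 i, Finset.sum_const, Finset.card_univ,
      Fintype.card_fin, nsmul_eq_mul]
    simp only [Fin.val_last]
    have := hct
    simp only [hcdef] at this
    rw [this]
  rw [hsum] at hbess
  -- case analysis on a = c 0
  set a := c 0 with hadef
  have hta : (t:ℤ) ≥ 1 := by exact_mod_cast ht1
  have hcases : a = 0 ∨ (a = -1 ∧ t ≤ 2) := by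
    have h1 : a ≤ 0 := by nlinarith
    have h2 : -1 ≤ a := by nlinarith
    interval_cases a
    · right
      constructor
      · rfl
      · by_contra h
        have ht3 : (3:ℤ) ≤ (t:ℤ) := by exact_mod_cast (by omega : 3 ≤ t)
        nlinarith
    · left; rfl
  rcases hcases with h0 | ⟨hneg, ht2⟩
  · -- standard extension
    refine ⟨_, rep_extend hc htN ⟨hz1, hz0, hzu⟩ ?_ ?_⟩
    · intro i hi
      have := hconst i hi
      simp only [hcdef] at this
      rw [this]
      exact_mod_cast h0
    · have := hct
      simp only [hcdef, hadef] at this h0 ⊢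
      omega
  · -- exceptional case: t ≤ 2, so t ∈ {1, 2}
    interval_cases t
    · -- t = 1 : swap the two basis vectors and extend
      have hc0' : p (u 1) (z 0) = -1 := by
        have h := hneg; simp only [hadef, hcdef] at h; exact h
      have hc1' : p (u 1) (z 1) = 0 := by
        have h1 := hct
        simp only [hadef] at hneg
        have h2 : c 1 = 0 := by omega
        simp only [hcdef] at h2; exact h2
      have hswap : Rep u 1 (fun n => if n = 0 then -(z 1) else -(z 0)) := by
        refine ⟨?_, ?_, ?_⟩
        · intro i hi
          interval_cases i
          · show p (-(z 1)) (-(z 1)) = 1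
            rw [p_neg_neg]; exact hz1 1 (by omega)
          · show p (-(z 0)) (-(z 0)) = 1
            rw [p_neg_neg]; exact hz1 0 (by omega)
        · intro i j hij hj
          have h1 : i = 0 := by omega
          have h2 : j = 1 := by omega
          subst h1; subst h2
          show p (-(z 1)) (-(z 0)) = 0
          rw [p_neg_neg, p_comm]
          exact hz0 0 1 (by omega) (by omega)
        · intro i hi
          have h1 : i = 0 := by omega
          subst h1
          show u 0 = -(z 1) - -(z 0)
          rw [hzu 0 (by omega)]
          abel
      refine ⟨_, rep_extend hc htN hswap ?_ ?_⟩
      · intro i hi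
        have h1 : i = 0 := by omega
        subst h1
        show p (u 1) (-(z 1)) = 0
        rw [p_neg_right, hc1']
        ring
      · show p (u 1) (-(z 0)) = 1
        rw [p_neg_right, hc0']
        ring
    · -- t = 2 : derive a contradiction using u 3
      exfalso
      have h3N : 3 < N := by omega
      have hc0' : p (u 2) (z 0) = -1 := by
        have h := hneg; simp only [hadef, hcdef] at h; exact h
      have hc1' : p (u 2) (z 1) = -1 := by
        have := hconst 1 (by omega)
        simp only [hcdef] at this
        rw [this]; exact hneg
      have hc2' : p (u 2) (z 2) = 0 := by
        have h1 := hct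
        simp only [hadef] at hneg
        have h2 : c 2 = 0 := by omega
        simp only [hcdef] at h2; exact h2
      have hproj : (∑ b : Fin 3, p (u 2) ((fun a : Fin 3 => z (a:ℕ)) b) • (fun a : Fin 3 => z (a:ℕ)) b)
          = -(z 0) - z 1 := by
        rw [Fin.sum_univ_three]
        simp only [Fin.val_zero, Fin.val_one, Fin.val_two]
        rw [hc0', hc1', hc2']
        module
      have hsumsq : (∑ b : Fin 3, (p (u 2) ((fun a : Fin 3 => z (a:ℕ)) b))^2) = 2 := by
        rw [Fin.sum_univ_three]
        simp only [Fin.val_zero, Fin.val_one, Fin.val_two]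
        rw [hc0', hc1', hc2']
        ring
      have hres := residual_norm horth (u 2)
      rw [hproj, hsumsq, hc.1 2 htN] at hres
      have hu2 : u 2 = -(z 0) - z 1 := by
        have h0 : u 2 - (-(z 0) - z 1) = 0 := p_self_eq_zero (by rw [hres]; ring)
        have := sub_eq_zero.mp h0
        exact this
      have hd01 : p (z 0) (u 3) = p (z 1) (u 3) := by
        have hfar : p (u 0) (u 3) = 0 := hc.2.2 0 3 (by omega) h3N
        rw [hzu 0 (by omega), p_sub_left] at hfar
        norm_num at hfar
        omega
      have hd12 : p (z 1) (u 3) = p (z 2) (u 3) := by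
        have hfar : p (u 1) (u 3) = 0 := hc.2.2 1 3 (by omega) h3N
        rw [hzu 1 (by omega), p_sub_left] at hfar
        norm_num at hfar
        omega
      have hlast : p (u 2) (u 3) = -1 := hc.2.1 2 (by omega)
      rw [hu2, p_sub_left, p_neg_left] at hlast
      omega

lemma rep_base {N : ℕ} {u : ℕ → (Fin m → ℤ)} (hc : ChainHyp N u) (hN : 1 ≤ N) :
    ∃ z, Rep u 1 z := by
  obtain ⟨z1, z2, h1, h2, h12, hu⟩ := norm_two (hc.1 0 hN)
  refine ⟨fun n => if n = 0 then z1 else z2, ?_, ?_, ?_⟩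
  · intro i hi
    interval_cases i
    · show p z1 z1 = 1; exact h1
    · show p z2 z2 = 1; exact h2
  · intro i j hij hj
    have hi0 : i = 0 := by omega
    have hj1 : j = 1 := by omega
    subst hi0; subst hj1
    show p z1 z2 = 0; exact h12
  · intro i hi
    have hi0 : i = 0 := by omega
    subst hi0
    show u 0 = z1 - z2; exact hu

lemma chain_rep {N : ℕ} {u : ℕ → (Fin m → ℤ)} (hc : ChainHyp N u) (hN : 4 ≤ N) :
    ∃ z, Rep u N z := by
  have main : ∀ t, 1 ≤ t → t ≤ N → ∃ z, Rep u t z := by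
    intro t
    induction t with
    | zero => omega
    | succ n ih =>
      intro _ hn
      by_cases hn1 : n = 0
      · subst hn1; exact rep_base hc (by omega)
      · obtain ⟨z, hz⟩ := ih (by omega) (by omega)
        exact rep_step hc hN (by omega) (by omega) hz
  exact main N (by omega) le_rfl


section Qpart
variable {k d : ℕ}



lemma Qform_eq (x y : Fin (k+1) → ℤ) : Qform k x y = 2 * (x 0 * y 0) - p x y := rfl

lemma bv_eq_E (a : ℕ) (ha : a ≤ k) : basisVec k a = E (⟨a, by omega⟩ : Fin (k+1)) := by
  funext j
  simp [basisVec, E, Fin.ext_iff]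

lemma bv_apply_zero (a : ℕ) : basisVec k a 0 = if a = 0 then 1 else 0 := by
  simp [basisVec, eq_comm]

lemma p_bv (a b : ℕ) (ha : a ≤ k) (hb : b ≤ k) :
    p (basisVec k a) (basisVec k b) = if a = b then 1 else 0 := by
  rw [bv_eq_E a ha, bv_eq_E b hb]
  by_cases h : a = b
  · subst h; rw [if_pos rfl, E_self]
  · rw [if_neg h, E_orth (by simp [Fin.ext_iff]; omega)]

lemma qbv (a b : ℕ) (ha : a ≤ k) (hb : b ≤ k) :
    Qform k (basisVec k a) (basisVec k b)
      = if a = 0 ∧ b = 0 then 1 else if a = b then -1 else 0 := by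
  rw [Qform_eq, p_bv a b ha hb, bv_apply_zero, bv_apply_zero]
  split_ifs <;> omega

lemma Q_comm (x y : Fin (k+1) → ℤ) : Qform k x y = Qform k y x := by
  rw [Qform_eq, Qform_eq, p_comm]; ring

lemma Q_add_left (x y z : Fin (k+1) → ℤ) :
    Qform k (x + y) z = Qform k x z + Qform k y z := by
  rw [Qform_eq, Qform_eq, Qform_eq, p_add_left]
  have : (x + y) 0 = x 0 + y 0 := rfl
  rw [this]; ring

lemma Q_sub_left (x y z : Fin (k+1) → ℤ) :
    Qform k (x - y) z = Qform k x z - Qform k y z := by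
  rw [Qform_eq, Qform_eq, Qform_eq, p_sub_left]
  have : (x - y) 0 = x 0 - y 0 := rfl
  rw [this]; ring

lemma Q_smul_left (c : ℤ) (x z : Fin (k+1) → ℤ) :
    Qform k (c • x) z = c * Qform k x z := by
  rw [Qform_eq, Qform_eq, p_smul_left]
  have : (c • x) 0 = c * x 0 := rfl
  rw [this]; ring

lemma Q_add_right (x y z : Fin (k+1) → ℤ) :
    Qform k z (x + y) = Qform k z x + Qform k z y := by
  rw [Q_comm, Q_add_left, Q_comm x z, Q_comm y z]

lemma Q_sub_right (x y z : Fin (k+1) → ℤ) :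
    Qform k z (x - y) = Qform k z x - Qform k z y := by
  rw [Q_comm, Q_sub_left, Q_comm x z, Q_comm y z]

lemma Q_smul_right (c : ℤ) (x z : Fin (k+1) → ℤ) :
    Qform k z (c • x) = c * Qform k z x := by
  rw [Q_comm, Q_smul_left, Q_comm x z]

lemma Q_sum_right {ι : Type} (s : Finset ι) (f : ι → (Fin (k+1) → ℤ)) (z : Fin (k+1) → ℤ) :
    Qform k z (∑ i ∈ s, f i) = ∑ i ∈ s, Qform k z (f i) := by
  classical
  induction s using Finset.induction with
  | empty => simp [Qform, p]
  | insert _ _ h ih => rw [Finset.sum_insert h, Q_add_right, ih, Finset.sum_insert h]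

lemma Q_sum_left {ι : Type} (s : Finset ι) (f : ι → (Fin (k+1) → ℤ)) (z : Fin (k+1) → ℤ) :
    Qform k (∑ i ∈ s, f i) z = ∑ i ∈ s, Qform k (f i) z := by
  rw [Q_comm, Q_sum_right]
  exact Finset.sum_congr rfl fun i _ => Q_comm _ _

/-- Q of a chain generator pair. -/
lemma QChain (a b : ℕ) (ha : 1 ≤ a) (hak : a + 1 ≤ k) (hb : 1 ≤ b) (hbk : b + 1 ≤ k) :
    Qform k (basisVec k a - basisVec k (a+1)) (basisVec k b - basisVec k (b+1))
      = if a = b then -2 else if a + 1 = b ∨ b + 1 = a then 1 else 0 := by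
  rw [Q_sub_left, Q_sub_right, Q_sub_right,
    qbv a b (by omega) (by omega), qbv a (b+1) (by omega) (by omega),
    qbv (a+1) b (by omega) (by omega), qbv (a+1) (b+1) (by omega) (by omega)]
  split_ifs <;> first | omega | simp_all | (simp_all; omega)


/-- Q of the sum `S = ∑_{i=1}^d e_i` against a basis vector. -/
lemma QS_bv (t : ℕ) (h1 : 1 ≤ t) (ht : t ≤ k) (hdk : d ≤ k) :
    Qform k (∑ i ∈ Finset.Icc 1 d, basisVec k i) (basisVec k t)
      = if t ≤ d then -1 else 0 := by
  rw [Q_sum_left]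
  have h : ∀ i ∈ Finset.Icc 1 d, Qform k (basisVec k i) (basisVec k t)
      = if i = t then -1 else 0 := by
    intro i hi
    rw [Finset.mem_Icc] at hi
    rw [qbv i t (by omega) (by omega), if_neg (by omega)]
  rw [Finset.sum_congr rfl h, Finset.sum_ite_eq' (Finset.Icc 1 d) t]
  simp [Finset.mem_Icc]
  omega

lemma Q_bv0_S (hdk : d ≤ k) :
    Qform k (basisVec k 0) (∑ i ∈ Finset.Icc 1 d, basisVec k i) = 0 := by
  rw [Q_sum_right]
  refine Finset.sum_eq_zero fun i hi => ?_
  rw [Finset.mem_Icc] at hi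
  rw [qbv 0 i (by omega) (by omega), if_neg (by omega), if_neg (by omega)]

lemma Q_S_bv0 (hdk : d ≤ k) :
    Qform k (∑ i ∈ Finset.Icc 1 d, basisVec k i) (basisVec k 0) = 0 := by
  rw [Q_comm]; exact Q_bv0_S hdk

lemma Q_S_S (hdk : d ≤ k) :
    Qform k (∑ i ∈ Finset.Icc 1 d, basisVec k i) (∑ i ∈ Finset.Icc 1 d, basisVec k i)
      = -(d:ℤ) := by
  rw [Q_sum_right]
  have h : ∀ i ∈ Finset.Icc 1 d,
      Qform k (∑ j ∈ Finset.Icc 1 d, basisVec k j) (basisVec k i) = -1 := by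
    intro i hi
    rw [Finset.mem_Icc] at hi
    rw [QS_bv i (by omega) (by omega) hdk, if_pos (by omega)]
  rw [Finset.sum_congr rfl h, Finset.sum_const, Nat.card_Icc]
  simp

/-- `f = h - e_1 - ⋯ - e_d` has square `1 - d`. -/
lemma Q_f_f (hdk : d ≤ k) :
    Qform k (basisVec k 0 - ∑ i ∈ Finset.Icc 1 d, basisVec k i)
            (basisVec k 0 - ∑ i ∈ Finset.Icc 1 d, basisVec k i) = 1 - (d:ℤ) := by
  rw [Q_sub_left, Q_sub_right, Q_sub_right, qbv 0 0 (by omega) (by omega),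
    Q_bv0_S hdk, Q_S_bv0 hdk, Q_S_S hdk]
  norm_num

/-- `Q(f, e_b - e_{b+1})`. -/
lemma Q_f_chain (b : ℕ) (hb : 1 ≤ b) (hbk : b + 1 ≤ k) (hdk : d ≤ k) :
    Qform k (basisVec k 0 - ∑ i ∈ Finset.Icc 1 d, basisVec k i)
            (basisVec k b - basisVec k (b+1)) = if b = d then 1 else 0 := by
  rw [Q_sub_left, Q_sub_right, Q_sub_right,
    qbv 0 b (by omega) (by omega), qbv 0 (b+1) (by omega) (by omega),
    QS_bv b (by omega) (by omega) hdk, QS_bv (b+1) (by omega) (by omega) hdk]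
  split_ifs <;> first | omega | simp_all | (simp_all; omega)

/-- `Q(e_b - e_{b+1}, f)`. -/
lemma Q_chain_f (b : ℕ) (hb : 1 ≤ b) (hbk : b + 1 ≤ k) (hdk : d ≤ k) :
    Qform k (basisVec k b - basisVec k (b+1))
            (basisVec k 0 - ∑ i ∈ Finset.Icc 1 d, basisVec k i) = if b = d then 1 else 0 := by
  rw [Q_comm]; exact Q_f_chain b hb hbk hdk

end Qpart

end NoEmbAux

/-- Let `d ≥ 1`, `k ≥ 2d`.  Let `H_d ⊆ ℤ^{1+k}` be the subgroup generated
by `e_1 - e_2, …, e_{2d-1} - e_{2d}` and `h - e_1 - ⋯ - e_d`, with the restriction of `Q`.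
Then for every `m ≥ 1` there is no injective `ℤ`-linear map `j : H_d → ℤ^m` with
`B_m(j x, j y) = Q(x, y)` for all `x, y ∈ H_d`. -/
theorem no_embedding_of_Lambda_d (d k m : ℕ) (hd : 1 ≤ d) (hk : 2*d ≤ k) (hm : 1 ≤ m) :
    ¬ ∃ j : (Submodule.span ℤ (Set.range (gen d k))) →ₗ[ℤ] (Fin m → ℤ),
        Function.Injective j ∧
        ∀ x y : Submodule.span ℤ (Set.range (gen d k)),
          B m (j x) (j y) = Qform k (x : Fin (k+1) → ℤ) (y : Fin (k+1) → ℤ) := by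
  classical
  rintro ⟨J, hinj, hB⟩
  have hp : ∀ x y : Submodule.span ℤ (Set.range (gen d k)), NoEmbAux.p (J x) (J y)
      = -(Qform k (x : Fin (k+1) → ℤ) (y : Fin (k+1) → ℤ)) := by
    intro x y
    have h1 := hB x y
    have h2 : B m (J x) (J y) = -(NoEmbAux.p (J x) (J y)) := rfl
    rw [h2] at h1
    omega
  have hGmem : ∀ i : Fin (2*d), gen d k i ∈ Submodule.span ℤ (Set.range (gen d k)) :=
    fun i => Submodule.subset_span ⟨i, rfl⟩
  have hzero : ∀ x : Submodule.span ℤ (Set.range (gen d k)),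
      Qform k (x : Fin (k+1) → ℤ) (x : Fin (k+1) → ℤ) = 0 →
      (x : Fin (k+1) → ℤ) = 0 := by
    intro x hx
    have h0 : NoEmbAux.p (J x) (J x) = 0 := by rw [hp, hx]; ring
    have h1 : J x = 0 := NoEmbAux.p_self_eq_zero h0
    have h2 : x = 0 := by
      apply hinj
      rw [h1, map_zero]
    rw [h2]
    rfl
  have hgenchain : ∀ i : Fin (2*d), (i : ℕ) < 2*d - 1 →
      gen d k i = basisVec k ((i:ℕ)+1) - basisVec k ((i:ℕ)+2) := by
    intro i hi
    simp [gen, hi]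
  have hgenf : ∀ i : Fin (2*d), (i : ℕ) = 2*d - 1 →
      gen d k i = basisVec k 0 - ∑ a ∈ Finset.Icc 1 d, basisVec k a := by
    intro i hi
    simp [gen, hi]
  rcases (by omega : d = 1 ∨ d = 2 ∨ 3 ≤ d) with hd1 | hd2 | hd3
  · -- d = 1 : the last generator is isotropic
    subst hd1
    set x := (⟨gen 1 k ⟨1, by omega⟩, hGmem ⟨1, by omega⟩⟩ :
      Submodule.span ℤ (Set.range (gen 1 k))) with hxdef
    have hcoe : (x : Fin (k+1) → ℤ)
        = basisVec k 0 - ∑ a ∈ Finset.Icc 1 1, basisVec k a :=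
      hgenf ⟨1, by omega⟩ rfl
    have hQ : Qform k (x : Fin (k+1) → ℤ) (x : Fin (k+1) → ℤ) = 0 := by
      rw [hcoe, NoEmbAux.Q_f_f (by omega : 1 ≤ k)]
      norm_num
    have h0 := hzero x hQ
    rw [hcoe] at h0
    have h1 := congrFun h0 0
    rw [Pi.sub_apply, Finset.sum_apply, Pi.zero_apply] at h1
    rw [NoEmbAux.bv_apply_zero, if_pos rfl] at h1
    have h2 : ∀ a ∈ Finset.Icc 1 1, basisVec k a 0 = 0 := by
      intro a ha
      rw [Finset.mem_Icc] at ha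
      rw [NoEmbAux.bv_apply_zero, if_neg (by omega)]
    rw [Finset.sum_congr rfl h2, Finset.sum_const] at h1
    simp at h1
  · -- d = 2 : `2h - e₁ - e₂ - e₃ - e₄` is isotropic
    subst hd2
    have hc0 : gen 2 k ⟨0, by omega⟩ = basisVec k 1 - basisVec k 2 := by
      have := hgenchain ⟨0, by omega⟩ (by norm_num)
      simpa using this
    have hc1 : gen 2 k ⟨1, by omega⟩ = basisVec k 2 - basisVec k 3 := by
      have := hgenchain ⟨1, by omega⟩ (by norm_num)
      simpa using this
    have hc2 : gen 2 k ⟨2, by omega⟩ = basisVec k 3 - basisVec k 4 := by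
      have := hgenchain ⟨2, by omega⟩ (by norm_num)
      simpa using this
    have hc3 : gen 2 k ⟨3, by omega⟩
        = basisVec k 0 - ∑ a ∈ Finset.Icc 1 2, basisVec k a := by
      have := hgenf ⟨3, by omega⟩ (by norm_num)
      simpa using this
    set x := ((⟨gen 2 k ⟨0, by omega⟩, hGmem ⟨0, by omega⟩⟩ :
        Submodule.span ℤ (Set.range (gen 2 k)))
      + (2:ℤ) • ⟨gen 2 k ⟨1, by omega⟩, hGmem ⟨1, by omega⟩⟩
      + ⟨gen 2 k ⟨2, by omega⟩, hGmem ⟨2, by omega⟩⟩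
      + (2:ℤ) • ⟨gen 2 k ⟨3, by omega⟩, hGmem ⟨3, by omega⟩⟩) with hxdef
    have hcoe : (x : Fin (k+1) → ℤ)
        = (basisVec k 1 - basisVec k 2)
          + (2:ℤ) • (basisVec k 2 - basisVec k 3)
          + (basisVec k 3 - basisVec k 4)
          + (2:ℤ) • (basisVec k 0 - ∑ a ∈ Finset.Icc 1 2, basisVec k a) := by
      rw [hxdef]
      simp only [Submodule.coe_add, SetLike.val_smul]
      rw [hc0, hc1, hc2, hc3]
    have q11 : Qform k (basisVec k 1 - basisVec k 2) (basisVec k 1 - basisVec k 2) = -2 := by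
      rw [NoEmbAux.QChain 1 1 (by omega) (by omega) (by omega) (by omega)]; norm_num
    have q12 : Qform k (basisVec k 1 - basisVec k 2) (basisVec k 2 - basisVec k 3) = 1 := by
      rw [NoEmbAux.QChain 1 2 (by omega) (by omega) (by omega) (by omega)]; norm_num
    have q13 : Qform k (basisVec k 1 - basisVec k 2) (basisVec k 3 - basisVec k 4) = 0 := by
      rw [NoEmbAux.QChain 1 3 (by omega) (by omega) (by omega) (by omega)]; norm_num
    have q21 : Qform k (basisVec k 2 - basisVec k 3) (basisVec k 1 - basisVec k 2) = 1 := by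
      rw [NoEmbAux.QChain 2 1 (by omega) (by omega) (by omega) (by omega)]; norm_num
    have q22 : Qform k (basisVec k 2 - basisVec k 3) (basisVec k 2 - basisVec k 3) = -2 := by
      rw [NoEmbAux.QChain 2 2 (by omega) (by omega) (by omega) (by omega)]; norm_num
    have q23 : Qform k (basisVec k 2 - basisVec k 3) (basisVec k 3 - basisVec k 4) = 1 := by
      rw [NoEmbAux.QChain 2 3 (by omega) (by omega) (by omega) (by omega)]; norm_num
    have q31 : Qform k (basisVec k 3 - basisVec k 4) (basisVec k 1 - basisVec k 2) = 0 := by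
      rw [NoEmbAux.QChain 3 1 (by omega) (by omega) (by omega) (by omega)]; norm_num
    have q32 : Qform k (basisVec k 3 - basisVec k 4) (basisVec k 2 - basisVec k 3) = 1 := by
      rw [NoEmbAux.QChain 3 2 (by omega) (by omega) (by omega) (by omega)]; norm_num
    have q33 : Qform k (basisVec k 3 - basisVec k 4) (basisVec k 3 - basisVec k 4) = -2 := by
      rw [NoEmbAux.QChain 3 3 (by omega) (by omega) (by omega) (by omega)]; norm_num
    have qf1 : Qform k (basisVec k 0 - ∑ a ∈ Finset.Icc 1 2, basisVec k a)
        (basisVec k 1 - basisVec k 2) = 0 := by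
      rw [NoEmbAux.Q_f_chain 1 (by omega) (by omega) (by omega)]; norm_num
    have qf2 : Qform k (basisVec k 0 - ∑ a ∈ Finset.Icc 1 2, basisVec k a)
        (basisVec k 2 - basisVec k 3) = 1 := by
      rw [NoEmbAux.Q_f_chain 2 (by omega) (by omega) (by omega)]; norm_num
    have qf3 : Qform k (basisVec k 0 - ∑ a ∈ Finset.Icc 1 2, basisVec k a)
        (basisVec k 3 - basisVec k 4) = 0 := by
      rw [NoEmbAux.Q_f_chain 3 (by omega) (by omega) (by omega)]; norm_num
    have q1f : Qform k (basisVec k 1 - basisVec k 2)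
        (basisVec k 0 - ∑ a ∈ Finset.Icc 1 2, basisVec k a) = 0 := by
      rw [NoEmbAux.Q_chain_f 1 (by omega) (by omega) (by omega)]; norm_num
    have q2f : Qform k (basisVec k 2 - basisVec k 3)
        (basisVec k 0 - ∑ a ∈ Finset.Icc 1 2, basisVec k a) = 1 := by
      rw [NoEmbAux.Q_chain_f 2 (by omega) (by omega) (by omega)]; norm_num
    have q3f : Qform k (basisVec k 3 - basisVec k 4)
        (basisVec k 0 - ∑ a ∈ Finset.Icc 1 2, basisVec k a) = 0 := by
      rw [NoEmbAux.Q_chain_f 3 (by omega) (by omega) (by omega)]; norm_num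
    have qff : Qform k (basisVec k 0 - ∑ a ∈ Finset.Icc 1 2, basisVec k a)
        (basisVec k 0 - ∑ a ∈ Finset.Icc 1 2, basisVec k a) = -1 := by
      rw [NoEmbAux.Q_f_f (by omega)]; norm_num
    have hQ : Qform k (x : Fin (k+1) → ℤ) (x : Fin (k+1) → ℤ) = 0 := by
      rw [hcoe]
      simp only [NoEmbAux.Q_add_left, NoEmbAux.Q_add_right,
        NoEmbAux.Q_smul_left, NoEmbAux.Q_smul_right,
        q11, q12, q13, q21, q22, q23, q31, q32, q33,
        qf1, qf2, qf3, q1f, q2f, q3f, qff]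
      ring
    have h0 := hzero x hQ
    rw [hcoe] at h0
    have h1 := congrFun h0 0
    have hS : (∑ a ∈ Finset.Icc 1 2, basisVec k a) 0 = 0 := by
      rw [Finset.sum_apply]
      refine Finset.sum_eq_zero fun a ha => ?_
      rw [Finset.mem_Icc] at ha
      rw [NoEmbAux.bv_apply_zero, if_neg (by omega)]
    simp [hS, NoEmbAux.bv_apply_zero] at h1
  · -- d ≥ 3 : use the chain structure theorem
    set N := 2*d - 1 with hN
    set U : ℕ → (Fin m → ℤ) := fun i =>
      if h : i < N then J ⟨gen d k ⟨i, by omega⟩, hGmem ⟨i, by omega⟩⟩ else 0 with hU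
    set w : Fin m → ℤ := J ⟨gen d k ⟨N, by omega⟩, hGmem ⟨N, by omega⟩⟩ with hw
    -- pairings between chain vectors
    have hUU : ∀ i j : ℕ, i < N → j < N → NoEmbAux.p (U i) (U j)
        = -(Qform k (basisVec k (i+1) - basisVec k (i+2))
              (basisVec k (j+1) - basisVec k (j+2))) := by
      intro i j hi hj
      rw [hU]
      simp only [dif_pos hi, dif_pos hj]
      rw [hp]
      congr 2
      · exact hgenchain ⟨i, by omega⟩ (by simpa using hi)
      · exact hgenchain ⟨j, by omega⟩ (by simpa using hj)
    have hwU : ∀ i : ℕ, i < N → NoEmbAux.p w (U i)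
        = -(if i + 1 = d then 1 else 0) := by
      intro i hi
      rw [hU, hw]
      simp only [dif_pos hi]
      rw [hp]
      have h1 : ((⟨gen d k ⟨N, by omega⟩, hGmem ⟨N, by omega⟩⟩ :
          Submodule.span ℤ (Set.range (gen d k))) : Fin (k+1) → ℤ)
          = basisVec k 0 - ∑ a ∈ Finset.Icc 1 d, basisVec k a :=
        hgenf ⟨N, by omega⟩ (by simp [hN])
      have h2 : ((⟨gen d k ⟨i, by omega⟩, hGmem ⟨i, by omega⟩⟩ :
          Submodule.span ℤ (Set.range (gen d k))) : Fin (k+1) → ℤ)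
          = basisVec k (i+1) - basisVec k (i+2) :=
        hgenchain ⟨i, by omega⟩ (by simpa using hi)
      rw [h1, h2, NoEmbAux.Q_f_chain (i+1) (by omega) (by omega) (by omega)]
    have hww : NoEmbAux.p w w = (d:ℤ) - 1 := by
      rw [hw, hp]
      have h1 : ((⟨gen d k ⟨N, by omega⟩, hGmem ⟨N, by omega⟩⟩ :
          Submodule.span ℤ (Set.range (gen d k))) : Fin (k+1) → ℤ)
          = basisVec k 0 - ∑ a ∈ Finset.Icc 1 d, basisVec k a :=
        hgenf ⟨N, by omega⟩ (by simp [hN])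
      rw [h1, NoEmbAux.Q_f_f (by omega)]
      ring
    -- the chain hypotheses
    have hch : NoEmbAux.ChainHyp N U := by
      refine ⟨?_, ?_, ?_⟩
      · intro i hi
        rw [hUU i i hi hi,
          NoEmbAux.QChain (i+1) (i+1) (by omega) (by omega) (by omega) (by omega),
          if_pos rfl]
        try norm_num
      · intro i hi
        rw [hUU i (i+1) (by omega) hi,
          NoEmbAux.QChain (i+1) (i+2) (by omega) (by omega) (by omega) (by omega),
          if_neg (by omega), if_pos (by omega)]
        try norm_num
      · intro i j hij hj
        rw [hUU i j (by omega) hj,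
          NoEmbAux.QChain (i+1) (j+1) (by omega) (by omega) (by omega) (by omega),
          if_neg (by omega), if_neg (by omega)]
        try norm_num
    obtain ⟨z, hrep⟩ := NoEmbAux.chain_rep hch (by omega)
    -- the pairing sequence of w with the orthonormal basis
    set c : ℕ → ℤ := fun i => NoEmbAux.p w (z i) with hc
    have hrel : ∀ i, i < N → c i - c (i+1) = -(if i + 1 = d then 1 else 0) := by
      intro i hi
      have h1 := hwU i hi
      rw [hrep.2.2 i hi, NoEmbAux.p_sub_right] at h1
      exact h1
    have hlow : ∀ i, i < d → c i = c 0 := by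
      refine NoEmbAux.const_chain c d ?_
      intro i hi
      have h1 := hrel i (by omega)
      rw [if_neg (by omega)] at h1
      omega
    have hcd : c d = c 0 + 1 := by
      have h1 := hrel (d-1) (by omega)
      rw [show d - 1 + 1 = d by omega, if_pos rfl] at h1
      have h2 := hlow (d-1) (by omega)
      omega
    have hhigh : ∀ i, d ≤ i → i ≤ 2*d - 1 → c i = c 0 + 1 := by
      have haux : ∀ j, j < d → c (d + j) = c d := by
        refine NoEmbAux.const_chain (fun j => c (d + j)) d ?_
        intro j hj
        have h1 := hrel (d + j) (by omega)
        rw [if_neg (by omega)] at h1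
        show c (d + (j + 1)) = c (d + j)
        rw [show d + (j + 1) = (d + j) + 1 by omega]
        omega
      intro i hi1 hi2
      have h1 := haux (i - d) (by omega)
      rw [show d + (i - d) = i by omega] at h1
      omega
    -- Bessel's inequality gives the contradiction
    have hbes := NoEmbAux.bessel (NoEmbAux.rep_orth hrep) w
    rw [hww] at hbes
    have hsum : (∑ a : Fin (N+1), (NoEmbAux.p w ((fun b : Fin (N+1) => z (b:ℕ)) a))^2)
        = (d:ℤ) * (c 0)^2 + (d:ℤ) * (c 0 + 1)^2 := by
      have he : ∀ a : Fin (N+1), (NoEmbAux.p w ((fun b : Fin (N+1) => z (b:ℕ)) a))^2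
          = (fun i => (c i)^2) (a : ℕ) := fun a => rfl
      rw [Finset.sum_congr rfl fun a _ => he a, Fin.sum_univ_eq_sum_range (fun i => (c i)^2)]
      rw [show N + 1 = 2*d by omega]
      rw [Finset.range_eq_Ico,
        ← Finset.sum_Ico_consecutive (fun i => (c i)^2) (Nat.zero_le d) (by omega : d ≤ 2*d)]
      have hA : (∑ i ∈ Finset.Ico 0 d, (c i)^2) = (d:ℤ) * (c 0)^2 := by
        have hfun : ∀ i ∈ Finset.Ico 0 d, (c i)^2 = (c 0)^2 := by
          intro i hi
          rw [Finset.mem_Ico] at hi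
          rw [hlow i hi.2]
        rw [Finset.sum_congr rfl hfun, Finset.sum_const, Nat.card_Ico, nsmul_eq_mul]
        norm_num
      have hB2 : (∑ i ∈ Finset.Ico d (2*d), (c i)^2) = (d:ℤ) * (c 0 + 1)^2 := by
        have hfun : ∀ i ∈ Finset.Ico d (2*d), (c i)^2 = (c 0 + 1)^2 := by
          intro i hi
          rw [Finset.mem_Ico] at hi
          rw [hhigh i hi.1 (by omega)]
        rw [Finset.sum_congr rfl hfun, Finset.sum_const, Nat.card_Ico, nsmul_eq_mul]
        congr 1
        push_cast
        omega
      rw [hA, hB2]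
    rw [hsum] at hbes
    set a := c 0 with ha
    have h1 : 1 ≤ a^2 + (a+1)^2 := by
      rcases le_or_gt 0 a with h | h
      · nlinarith
      · nlinarith
    have hd3' : (3:ℤ) ≤ (d:ℤ) := by exact_mod_cast hd3
    nlinarith
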